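/- Let X be a set and let R ⊆ F(X) be a symmetrized set of relators, all of length 4, satisfying T(4). If a, b, c are letters such that ab and b⁻¹c are both pairs (two-letter contiguous subwords of relators in R), and c ≠ a⁻¹, then ac is not a pair. In other words, in a T(4) presentation no pair is a sister-set. -/

import Mathlib

/-- A *word* over `X` is a finite sequence of letters, where a letter is a generator
`x : X` together with a sign (`true` for `x`, `false` for `x⁻¹`). -/
abbrev Word (X : Type*) := List (X × Bool)

/-- The formal inverse of a letter. -/
def letterInv {X : Type*} (l : X × Bool) : X × Bool := (l.1, !l.2)

/-- The element of the presented group `⟨X | R⟩` represented by a word. -/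
def toG {X : Type*} (R : Set (FreeGroup X)) (w : Word X) : PresentedGroup R :=
  PresentedGroup.mk R (FreeGroup.mk w)

/-- A word is freely reduced if it has no two adjacent mutually inverse letters. -/
def FreelyReduced {X : Type*} (w : Word X) : Prop :=
  w.Chain' fun l₁ l₂ => l₂ ≠ letterInv l₁

/-- A nonempty word `p` is a piece w.r.t. `R` if two distinct relators of `R` both start
with `p` (as reduced words, i.e. products without cancellation). -/
def IsPiece {X : Type*} [DecidableEq X] (R : Set (FreeGroup X)) (p : Word X) : Prop :=
  p ≠ [] ∧ ∃ r ∈ R, ∃ s ∈ R, r ≠ s ∧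
    (∃ u, FreeGroup.toWord r = p ++ u) ∧ (∃ v, FreeGroup.toWord s = p ++ v)

/-- A (reduced) word is cyclically reduced if its last letter is not the inverse
of its first letter. -/
def CyclicallyReducedWord {X : Type*} (w : Word X) : Prop :=
  FreelyReduced w ∧ ¬ ∃ (a : X × Bool) (t : Word X), w = a :: (t ++ [letterInv a])

/-- `R` is symmetrized: every relator is cyclically reduced and `R` is closed under
inversion and under cyclic permutation of reduced words. -/
def Symmetrized {X : Type*} [DecidableEq X] (R : Set (FreeGroup X)) : Prop :=
  (∀ r ∈ R, CyclicallyReducedWord (FreeGroup.toWord r)) ∧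
  (∀ r ∈ R, r⁻¹ ∈ R) ∧
  (∀ r ∈ R, ∀ (a : X × Bool) (t : Word X),
      FreeGroup.toWord r = a :: t → FreeGroup.mk (t ++ [a]) ∈ R)

/-- The C''(4) condition: all relators have length four, and no relator is a product
(without cancellation) of fewer than four pieces. -/
def Cpp4 {X : Type*} [DecidableEq X] (R : Set (FreeGroup X)) : Prop :=
  (∀ r ∈ R, (FreeGroup.toWord r).length = 4) ∧
  (∀ r ∈ R, ¬ ∃ ps : List (Word X), ps.length < 4 ∧ (∀ p ∈ ps, IsPiece R p) ∧
      FreeGroup.toWord r = ps.flatten)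

/-- The product `r * s` is reduced without cancellation. -/
def NoCancel {X : Type*} [DecidableEq X] (r s : FreeGroup X) : Prop :=
  FreeGroup.toWord (r * s) = FreeGroup.toWord r ++ FreeGroup.toWord s

/-- The T(4) condition. -/
def T4 {X : Type*} [DecidableEq X] (R : Set (FreeGroup X)) : Prop :=
  ∀ r₁ ∈ R, ∀ r₂ ∈ R, ∀ r₃ ∈ R,
    r₁ ≠ r₂⁻¹ → r₂ ≠ r₃⁻¹ → r₁ ≠ r₃⁻¹ →
    NoCancel r₁ r₂ ∨ NoCancel r₂ r₃ ∨ NoCancel r₃ r₁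

/-- The word `a t₁⋯tₙ b` is a chain word with inner link path `s₁⋯sₙ` (n ≥ 1):
there are letters `u₀, …, uₙ` with `u₀ = a⁻¹`, `uₙ = b` and `tᵢ uᵢ sᵢ⁻¹ u_{i-1}⁻¹ ∈ R`
for all `i`. -/
def IsChainWord {X : Type*} (R : Set (FreeGroup X))
    (a : X × Bool) (t s : Word X) (b : X × Bool) : Prop :=
  1 ≤ t.length ∧ ∃ hlen : t.length = s.length, ∃ u : ℕ → X × Bool,
    u 0 = letterInv a ∧ u t.length = b ∧
    ∀ i, ∀ hi : i < t.length,
      FreeGroup.mk [t[i], u (i + 1), letterInv (s[i]'(hlen ▸ hi)), letterInv (u i)] ∈ R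

/-- A word is geodesic if no strictly shorter word represents the same element of the
presented group. -/
def Geodesic {X : Type*} (R : Set (FreeGroup X)) (w : Word X) : Prop :=
  ∀ v : Word X, toG R v = toG R w → w.length ≤ v.length

/-- A word is cyclically geodesic if all of its cyclic permutations are geodesic. -/
def CyclicallyGeodesic {X : Type*} (R : Set (FreeGroup X)) (w : Word X) : Prop :=
  ∀ n : ℕ, Geodesic R (w.rotate n)

/-- A pair is a two-letter contiguous subword of (the reduced word of) a relator of `R`. -/
def IsPair {X : Type*} [DecidableEq X] (R : Set (FreeGroup X)) (l₁ l₂ : X × Bool) : Prop :=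
  ∃ r ∈ R, [l₁, l₂] <:+: FreeGroup.toWord r

/-- `P` holds for all cyclically-consecutive entries of `w`. -/
def CyclicAdj {X : Type*} (P : (X × Bool) → (X × Bool) → Prop) (w : Word X) : Prop :=
  ∀ i, ∀ hi : i < w.length,
    P (w[i]) (w[(i + 1) % w.length]'(Nat.mod_lt _ (by omega)))

/-- The presentation has parity with respect to `par : X → Bool` (`true` = white,
`false` = black) if in every relator, read cyclically, consecutive letters have
opposite parities. -/
def HasParity {X : Type*} [DecidableEq X] (R : Set (FreeGroup X)) (par : X → Bool) : Prop :=
  ∀ r ∈ R, CyclicAdj (fun l₁ l₂ => par l₁.1 ≠ par l₂.1) (FreeGroup.toWord r)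

/-- The presentation is alternating: in every relator, read cyclically, letters of
exponent `+1` and exponent `-1` alternate. -/
def AlternatingPresentation {X : Type*} [DecidableEq X] (R : Set (FreeGroup X)) : Prop :=
  ∀ r ∈ R, CyclicAdj (fun l₁ l₂ => l₁.2 ≠ l₂.2) (FreeGroup.toWord r)

/-- A word alternates in sign if adjacent letters have opposite exponents. -/
def AlternatesInSign {X : Type*} (w : Word X) : Prop :=
  w.Chain' fun l₁ l₂ => l₁.2 ≠ l₂.2

/-- A pair exchange: if `x₁x₂x₃x₄ ∈ R`, replace an occurrence of the contiguous subword
`x₁x₂` by `x₄⁻¹x₃⁻¹`. -/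
def PairExchange {X : Type*} (R : Set (FreeGroup X)) (v w : Word X) : Prop :=
  ∃ (p q : Word X) (x₁ x₂ x₃ x₄ : X × Bool),
    FreeGroup.mk [x₁, x₂, x₃, x₄] ∈ R ∧
    v = p ++ [x₁, x₂] ++ q ∧ w = p ++ [letterInv x₄, letterInv x₃] ++ q

/-- A free reduction deletes an adjacent mutually inverse pair of letters. -/
def FreeReductionStep {X : Type*} (v w : Word X) : Prop :=
  ∃ (p q : Word X) (l : X × Bool), v = p ++ [l, letterInv l] ++ q ∧ w = p ++ q

/-- A chain collapse replaces a contiguous chain word subword by its inner link path. -/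
def ChainCollapseStep {X : Type*} (R : Set (FreeGroup X)) (v w : Word X) : Prop :=
  ∃ (p q : Word X) (a b : X × Bool) (t s : Word X),
    IsChainWord R a t s b ∧ v = p ++ (a :: (t ++ [b])) ++ q ∧ w = p ++ s ++ q

/-- A chain flip replaces one side of a conjugacy chain by the other: it replaces the
whole word `s₁⋯sₙ` by `t₁⋯tₙ` (or vice versa) where, for some letter `a`, the word
`a t₁⋯tₙ a⁻¹` is a chain word with inner link path `s₁⋯sₙ`. -/
def ChainFlip {X : Type*} (R : Set (FreeGroup X)) (v w : Word X) : Prop :=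
  ∃ a : X × Bool, IsChainWord R a w v (letterInv a) ∨ IsChainWord R a v w (letterInv a)

namespace SisterAux

variable {X : Type*} [DecidableEq X]

omit [DecidableEq X] in
lemma letterInv_invol (l : X × Bool) : letterInv (letterInv l) = l := by
  cases l; simp [letterInv]

lemma reduce_eq_self : ∀ {w : Word X}, FreelyReduced w → FreeGroup.reduce w = w := by
  intro w
  induction w with
  | nil => intro _; rfl
  | cons a L ih =>
    intro h
    rw [FreeGroup.reduce.cons, ih h.tail]
    cases L with
    | nil => rfl
    | cons b t =>
      have hb : b ≠ letterInv a := (List.isChain_cons_cons.mp h).1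
      simp only []
      rw [if_neg]
      rintro ⟨h1, h2⟩
      apply hb
      cases a; cases b
      simp_all [letterInv]

lemma mk_toWord_of_reduced {w : Word X} (h : FreelyReduced w) :
    (FreeGroup.mk w).toWord = w := by
  rw [FreeGroup.toWord_mk, reduce_eq_self h]

omit [DecidableEq X] in
lemma chain4 {p q s t : X × Bool} (h : FreelyReduced [p, q, s, t]) :
    q ≠ letterInv p ∧ s ≠ letterInv q ∧ t ≠ letterInv s := by
  simp only [FreelyReduced, List.Chain', List.isChain_cons_cons, List.isChain_singleton, and_true] at h
  exact h

lemma rot1 {R : Set (FreeGroup X)} (hsym : Symmetrized R) {r : FreeGroup X} (hr : r ∈ R)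
    {p q s t : X × Bool} (hw : FreeGroup.toWord r = [p, q, s, t]) :
    ∃ r' ∈ R, FreeGroup.toWord r' = [q, s, t, p] := by
  have hcr := hsym.1 r hr
  rw [hw] at hcr
  obtain ⟨hred, hcyc⟩ := hcr
  obtain ⟨h1, h2, h3⟩ := chain4 hred
  have h4 : p ≠ letterInv t := by
    intro he
    exact hcyc ⟨p, [q, s], by rw [he, letterInv_invol]; rfl⟩
  refine ⟨_, hsym.2.2 r hr p [q, s, t] hw, mk_toWord_of_reduced ?_⟩
  show FreelyReduced [q, s, t, p]
  simp only [FreelyReduced, List.Chain', List.isChain_cons_cons, List.isChain_singleton, and_true]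
  exact ⟨h2, h3, h4⟩

lemma pair_head {R : Set (FreeGroup X)} (hsym : Symmetrized R)
    (hlen4 : ∀ r ∈ R, (FreeGroup.toWord r).length = 4)
    {l₁ l₂ : X × Bool} (h : IsPair R l₁ l₂) :
    ∃ r ∈ R, ∃ x y, FreeGroup.toWord r = [l₁, l₂, x, y] := by
  obtain ⟨r, hr, u, v, huv⟩ := h
  have hlen := hlen4 r hr
  rw [← huv] at hlen
  simp only [List.length_append, List.length_cons, List.length_nil] at hlen
  rcases u with _ | ⟨e, _ | ⟨f, _ | ⟨g, u⟩⟩⟩ <;>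
    rcases v with _ | ⟨x, _ | ⟨y, _ | ⟨z, v⟩⟩⟩ <;>
    (try (exfalso; simp only [List.length_cons, List.length_nil] at hlen; omega))
  · exact ⟨r, hr, x, y, by rw [← huv]; rfl⟩
  · obtain ⟨r', hr', hw'⟩ := rot1 hsym hr (show FreeGroup.toWord r = [e, l₁, l₂, x] by rw [← huv]; rfl)
    exact ⟨r', hr', x, e, hw'⟩
  · obtain ⟨r', hr', hw'⟩ := rot1 hsym hr (show FreeGroup.toWord r = [e, f, l₁, l₂] by rw [← huv]; rfl)
    obtain ⟨r'', hr'', hw''⟩ := rot1 hsym hr' hw'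
    exact ⟨r'', hr'', e, f, hw''⟩

/-- From a pair, get a relator whose word is `[l₂, x, y, l₁]`. -/
lemma pair_tail {R : Set (FreeGroup X)} (hsym : Symmetrized R)
    (hlen4 : ∀ r ∈ R, (FreeGroup.toWord r).length = 4)
    {l₁ l₂ : X × Bool} (h : IsPair R l₁ l₂) :
    ∃ r ∈ R, ∃ x y, FreeGroup.toWord r = [l₂, x, y, l₁] := by
  obtain ⟨r, hr, x, y, hw⟩ := pair_head hsym hlen4 h
  obtain ⟨r', hr', hw'⟩ := rot1 hsym hr hw
  exact ⟨r', hr', x, y, hw'⟩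

lemma toWord_inv4 {r : FreeGroup X} {w1 w2 w3 w4 : X × Bool}
    (hw : FreeGroup.toWord r = [w1, w2, w3, w4]) :
    FreeGroup.toWord r⁻¹ = [letterInv w4, letterInv w3, letterInv w2, letterInv w1] := by
  rw [FreeGroup.toWord_inv, hw]
  rfl

lemma not_noCancel {r s : FreeGroup X} {A B : Word X} {l : X × Bool}
    (hr : FreeGroup.toWord r = A ++ [l]) (hs : FreeGroup.toWord s = letterInv l :: B) :
    ¬ NoCancel r s := by
  intro h
  have hred := FreeGroup.reduce_toWord (r * s)
  rw [h, hr, hs] at hred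
  have hform : (A ++ [l]) ++ (letterInv l :: B) = A ++ (l.1, l.2) :: (l.1, !l.2) :: B := by
    simp [letterInv]
  rw [hform] at hred
  exact FreeGroup.reduce.not hred

end SisterAux

/-- In a symmetrized T(4) presentation with all relators of length 4, no pair is a
sister-set: if `ab` and `b⁻¹c` are pairs and `c ≠ a⁻¹`, then `ac` is not a pair. -/
theorem no_pair_is_sisterSet
    {X : Type*} [DecidableEq X] (R : Set (FreeGroup X))
    (hsym : Symmetrized R) (hlen4 : ∀ r ∈ R, (FreeGroup.toWord r).length = 4)
    (hT : T4 R) (a b c : X × Bool)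
    (hab : IsPair R a b) (hbc : IsPair R (letterInv b) c) (hca : c ≠ letterInv a) :
    ¬ IsPair R a c := by
  intro hac
  -- relator r₁ with word [b, x₁, y₁, a]
  obtain ⟨r₁, hr₁, x₁, y₁, hw₁⟩ := SisterAux.pair_tail hsym hlen4 hab
  -- relator r₃ with word [c, x₂, y₂, b⁻¹]
  obtain ⟨r₃, hr₃, x₂, y₂, hw₃⟩ := SisterAux.pair_tail hsym hlen4 hbc
  -- relator t' with word [c, x₃, y₃, a]; set r₂ := t'⁻¹
  obtain ⟨t', ht', x₃, y₃, hwt⟩ := SisterAux.pair_tail hsym hlen4 hac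
  set r₂ := t'⁻¹ with hr₂def
  have hr₂ : r₂ ∈ R := hsym.2.1 t' ht'
  have hw₂ : FreeGroup.toWord r₂ =
      [letterInv a, letterInv y₃, letterInv x₃, letterInv c] :=
    SisterAux.toWord_inv4 hwt
  -- basic reducedness facts
  have hba : b ≠ letterInv a := by
    obtain ⟨r, hr, xx, yy, hw⟩ := SisterAux.pair_head hsym hlen4 hab
    have := (hsym.1 r hr).1
    rw [hw] at this
    exact (SisterAux.chain4 this).1
  have hcb : c ≠ b := by
    obtain ⟨r, hr, xx, yy, hw⟩ := SisterAux.pair_head hsym hlen4 hbc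
    have := (hsym.1 r hr).1
    rw [hw] at this
    have := (SisterAux.chain4 this).1
    rwa [SisterAux.letterInv_invol] at this
  -- no two of r₁, r₂, r₃ are mutually inverse
  have hne12 : r₁ ≠ r₂⁻¹ := by
    intro he
    have := congrArg FreeGroup.toWord he
    rw [hw₁, hr₂def, inv_inv, hwt] at this
    exact hcb (List.head_eq_of_cons_eq this).symm
  have hne23 : r₂ ≠ r₃⁻¹ := by
    intro he
    have := congrArg FreeGroup.toWord he
    rw [hw₂, SisterAux.toWord_inv4 hw₃, SisterAux.letterInv_invol] at this
    have hfst := List.head_eq_of_cons_eq this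
    exact hba (by rw [← hfst])
  have hne13 : r₁ ≠ r₃⁻¹ := by
    intro he
    have := congrArg FreeGroup.toWord he
    rw [hw₁, SisterAux.toWord_inv4 hw₃] at this
    have : a = letterInv c := by
      have h4 := congrArg (fun l => l.getLast?) this
      simpa using h4
    apply hca
    rw [this, SisterAux.letterInv_invol]
  rcases hT r₁ hr₁ r₂ hr₂ r₃ hr₃ hne12 hne23 hne13 with h | h | h
  · exact SisterAux.not_noCancel (A := [b, x₁, y₁]) (l := a)
      (B := [letterInv y₃, letterInv x₃, letterInv c])
      (by rw [hw₁]; rfl) (by rw [hw₂]) h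
  · refine SisterAux.not_noCancel (A := [letterInv a, letterInv y₃, letterInv x₃])
      (l := letterInv c) (B := [x₂, y₂, letterInv b]) (by rw [hw₂]; rfl) ?_ h
    rw [hw₃, SisterAux.letterInv_invol]
  · refine SisterAux.not_noCancel (A := [c, x₂, y₂]) (l := letterInv b)
      (B := [x₁, y₁, a]) (by rw [hw₃]; rfl) ?_ h
    rw [hw₁, SisterAux.letterInv_invol]
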